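/- For every integer m ≥ 2 and every nonnegative integer n, the number of partitions of n in which each part occurs fewer than m times equals the number of partitions of n into parts not divisible by m. -/

import Mathlib

namespace GlaisherAux

/-- largest `k` with `m ^ k ∣ a` (for `a > 0`, `m ≥ 2`). -/
def v (m a : ℕ) : ℕ := Nat.findGreatest (fun k => m ^ k ∣ a) a

lemma pow_v_dvd (m a : ℕ) : m ^ v m a ∣ a :=
  Nat.findGreatest_spec (P := fun k => m ^ k ∣ a) (Nat.zero_le a) (by simp)

lemma k_le_of_pow_dvd {m k a : ℕ} (hm : 2 ≤ m) (hk : m ^ k ∣ a) (ha : 0 < a) : k ≤ a := by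
  have h1 : m ^ k ≤ a := Nat.le_of_dvd ha hk
  have h2 : k < 2 ^ k := Nat.lt_two_pow_self
  have h3 : 2 ^ k ≤ m ^ k := Nat.pow_le_pow_left hm k
  omega

lemma decomp (m a : ℕ) : a = m ^ v m a * (a / m ^ v m a) :=
  (Nat.mul_div_cancel' (pow_v_dvd m a)).symm

lemma not_dvd_div {m a : ℕ} (hm : 2 ≤ m) (ha : 0 < a) : ¬ m ∣ a / m ^ v m a := by
  intro ⟨c, hc⟩
  have hdvd : m ^ (v m a + 1) ∣ a := by
    refine ⟨c, ?_⟩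
    conv_lhs => rw [decomp m a, hc]
    ring
  have hle : v m a + 1 ≤ a := k_le_of_pow_dvd hm hdvd ha
  exact Nat.findGreatest_is_greatest (Nat.lt_succ_self _) hle hdvd

lemma v_eq {m b : ℕ} (hm : 2 ≤ m) (hb : ¬ m ∣ b) (hb0 : 0 < b) (j : ℕ) :
    v m (m ^ j * b) = j ∧ m ^ j * b / m ^ (v m (m ^ j * b)) = b := by
  have hm0 : 0 < m := by omega
  have ha : 0 < m ^ j * b := Nat.mul_pos ((pow_pos hm0 j)) hb0
  have hjle : j ≤ v m (m ^ j * b) :=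
    Nat.le_findGreatest (k_le_of_pow_dvd hm ⟨b, rfl⟩ ha) ⟨b, rfl⟩
  have hveq : v m (m ^ j * b) = j := by
    by_contra hne
    have hlt : j < v m (m ^ j * b) := lt_of_le_of_ne hjle (Ne.symm hne)
    have hdvd : m ^ (j + 1) ∣ m ^ j * b :=
      dvd_trans (pow_dvd_pow m hlt) (pow_v_dvd m _)
    rw [pow_succ] at hdvd
    have : m ∣ b := (mul_dvd_mul_iff_left (a := m ^ j) (by positivity)).mp hdvd
    exact hb this
  refine ⟨hveq, ?_⟩
  rw [hveq, Nat.mul_div_cancel_left _ (by positivity)]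

lemma base_unique {m b b' k j : ℕ} (hm : 2 ≤ m) (hb : ¬ m ∣ b) (hb0 : 0 < b)
    (hb' : ¬ m ∣ b') (hb0' : 0 < b') (h : m ^ k * b = m ^ j * b') : b = b' := by
  have h1 := (v_eq hm hb hb0 k).2
  have h2 := (v_eq hm hb' hb0' j).2
  rw [h] at h1
  rw [h1] at h2
  exact h2


/-- merge each part `a = m^k * b` into `m^k` copies of `b`. -/
def merge (m : ℕ) (s : Multiset ℕ) : Multiset ℕ :=
  s.bind fun a => Multiset.replicate (m ^ v m a) (a / m ^ v m a)

lemma merge_zero (m : ℕ) : merge m 0 = 0 := rfl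

lemma merge_add (m : ℕ) (s t : Multiset ℕ) : merge m (s + t) = merge m s + merge m t :=
  Multiset.add_bind _ _ _

lemma merge_cons (m a : ℕ) (s : Multiset ℕ) :
    merge m (a ::ₘ s) = Multiset.replicate (m ^ v m a) (a / m ^ v m a) + merge m s :=
  Multiset.cons_bind _ _ _

lemma merge_finset_sum {β : Type*} (m : ℕ) (F : Finset β) (g : β → Multiset ℕ) :
    merge m (∑ b ∈ F, g b) = ∑ b ∈ F, merge m (g b) := by
  classical
  induction F using Finset.induction_on with
  | empty => simp [merge_zero]
  | insert a F h ih => rw [Finset.sum_insert h, Finset.sum_insert h, merge_add, ih]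

lemma merge_sum (m : ℕ) (s : Multiset ℕ) : (merge m s).sum = s.sum := by
  induction s using Multiset.induction_on with
  | empty => rfl
  | cons a s ih =>
    rw [merge_cons, Multiset.sum_add, Multiset.sum_cons, ih, Multiset.sum_replicate,
      smul_eq_mul, ← decomp]

lemma mem_merge {m x : ℕ} {s : Multiset ℕ} (hm : 2 ≤ m) :
    x ∈ merge m s ↔ ∃ a ∈ s, x = a / m ^ v m a := by
  simp only [merge, Multiset.mem_bind, Multiset.mem_replicate]
  constructor
  · rintro ⟨a, ha, -, rfl⟩; exact ⟨a, ha, rfl⟩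
  · rintro ⟨a, ha, rfl⟩; exact ⟨a, ha, by positivity, rfl⟩

lemma merge_replicate {m b : ℕ} (hm : 2 ≤ m) (hb : ¬ m ∣ b) (hb0 : 0 < b) (j d : ℕ) :
    merge m (Multiset.replicate d (m ^ j * b)) = Multiset.replicate (d * m ^ j) b := by
  induction d with
  | zero => simp [merge_zero]
  | succ d ih =>
    rw [Multiset.replicate_succ, merge_cons, ih, (v_eq hm hb hb0 j).1,
      Nat.mul_div_cancel_left b (show 0 < m ^ j by positivity), ← Multiset.replicate_add]
    congr 1
    ring

lemma count_merge {m b : ℕ} (hm : 2 ≤ m) (hb : ¬ m ∣ b) (hb0 : 0 < b) {N : ℕ}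
    (s : Multiset ℕ) (hs0 : ∀ a ∈ s, 0 < a) (hN : ∀ a ∈ s, a < m ^ N) :
    (merge m s).count b = ∑ j ∈ Finset.range N, m ^ j * s.count (m ^ j * b) := by
  induction s using Multiset.induction_on with
  | empty => simp [merge_zero]
  | cons a s ih =>
    have ha0 : 0 < a := hs0 a (Multiset.mem_cons_self a s)
    have haN : a < m ^ N := hN a (Multiset.mem_cons_self a s)
    rw [merge_cons, Multiset.count_add,
      ih (fun x hx => hs0 x (Multiset.mem_cons_of_mem hx))
        (fun x hx => hN x (Multiset.mem_cons_of_mem hx))]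
    have hcnt : ∀ j, (a ::ₘ s).count (m ^ j * b) =
        s.count (m ^ j * b) + if m ^ j * b = a then 1 else 0 := by
      intro j; rw [Multiset.count_cons]
    simp only [hcnt, Nat.mul_add, Finset.sum_add_distrib]
    have key : (Multiset.replicate (m ^ v m a) (a / m ^ v m a)).count b =
        ∑ j ∈ Finset.range N, m ^ j * if m ^ j * b = a then 1 else 0 := by
      rw [Multiset.count_replicate]
      by_cases h : a / m ^ v m a = b
      · have ha : a = m ^ v m a * b := by conv_lhs => rw [decomp m a, h]
        have hvN : v m a < N := by
          have h1 : m ^ v m a ≤ a := Nat.le_of_dvd ha0 (pow_v_dvd m a)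
          exact (Nat.pow_lt_pow_iff_right (by omega : 1 < m)).mp
            (lt_of_le_of_lt h1 haN)
        rw [if_pos h, Finset.sum_eq_single_of_mem (v m a) (Finset.mem_range.mpr hvN)]
        · rw [if_pos ha.symm, mul_one]
        · intro j hj hne
          rw [if_neg, mul_zero]
          intro hja
          have hv := (v_eq hm hb hb0 j).1
          rw [hja] at hv
          exact hne hv.symm
      · rw [if_neg h, Finset.sum_eq_zero]
        intro j hj
        rw [if_neg, mul_zero]
        intro hja
        have h2 := (v_eq hm hb hb0 j).2
        rw [hja] at h2
        exact h h2
    omega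

lemma digits_unique {m : ℕ} (hm : 2 ≤ m) :
    ∀ (N : ℕ) (c c' : ℕ → ℕ), (∀ j, c j < m) → (∀ j, c' j < m) →
      (∑ j ∈ Finset.range N, m ^ j * c j) = (∑ j ∈ Finset.range N, m ^ j * c' j) →
      ∀ j < N, c j = c' j := by
  intro N
  induction N with
  | zero => intro c c' _ _ _ j hj; omega
  | succ N ih =>
    intro c c' hc hc' heq j hj
    have expand : ∀ d : ℕ → ℕ, (∑ j ∈ Finset.range (N + 1), m ^ j * d j) =
        d 0 + m * ∑ j ∈ Finset.range N, m ^ j * d (j + 1) := by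
      intro d
      rw [Finset.sum_range_succ', Finset.mul_sum, pow_zero, one_mul, add_comm]
      congr 1
      apply Finset.sum_congr rfl
      intro i _
      ring
    rw [expand c, expand c'] at heq
    have h0 : c 0 = c' 0 := by
      have := congrArg (· % m) heq
      simpa [Nat.add_mul_mod_self_left, Nat.mod_eq_of_lt (hc 0), Nat.mod_eq_of_lt (hc' 0)]
        using this
    have hT : (∑ j ∈ Finset.range N, m ^ j * c (j + 1)) =
        ∑ j ∈ Finset.range N, m ^ j * c' (j + 1) := by
      have hm0 : 0 < m := by omega
      have := heq
      rw [h0] at this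
      have := Nat.add_left_cancel this
      exact Nat.eq_of_mul_eq_mul_left hm0 this
    rcases j with _ | i
    · exact h0
    · exact ih (fun j => c (j + 1)) (fun j => c' (j + 1)) (fun j => hc _) (fun j => hc' _)
        hT i (by omega)

lemma merge_inj {m : ℕ} (hm : 2 ≤ m) {s s' : Multiset ℕ}
    (hs0 : ∀ a ∈ s, 0 < a) (hsc : ∀ a, s.count a < m)
    (hs0' : ∀ a ∈ s', 0 < a) (hsc' : ∀ a, s'.count a < m)
    (h : merge m s = merge m s') : s = s' := by
  ext x
  rcases Nat.eq_zero_or_pos x with rfl | hx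
  · rw [Multiset.count_eq_zero.mpr (fun h0 => absurd (hs0 0 h0) (by omega)),
      Multiset.count_eq_zero.mpr (fun h0 => absurd (hs0' 0 h0) (by omega))]
  set b := x / m ^ v m x with hbdef
  have hb0 : 0 < b := Nat.div_pos (Nat.le_of_dvd hx (pow_v_dvd m x)) (by positivity)
  have hb : ¬ m ∣ b := not_dvd_div hm hx
  have hxeq : x = m ^ v m x * b := decomp m x
  set N : ℕ := s.sum + s'.sum + x + 1 with hNdef
  have hNle : N ≤ m ^ N := by
    calc N ≤ 2 ^ N := Nat.le_of_lt Nat.lt_two_pow_self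
    _ ≤ m ^ N := Nat.pow_le_pow_left hm N
  have hsum : ∀ (t : Multiset ℕ), (∀ a ∈ t, 0 < a) → ∀ a ∈ t, a ≤ t.sum := by
    intro t ht a ha
    exact Multiset.single_le_sum (fun x _ => Nat.zero_le x) a ha
  have hNs : ∀ a ∈ s, a < m ^ N := by
    intro a ha
    have := hsum s hs0 a ha
    omega
  have hNs' : ∀ a ∈ s', a < m ^ N := by
    intro a ha
    have := hsum s' hs0' a ha
    omega
  have hkN : v m x < N := by
    have h1 : m ^ v m x ≤ x := Nat.le_of_dvd hx (pow_v_dvd m x)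
    have h2 : v m x < 2 ^ v m x := Nat.lt_two_pow_self
    have h3 : 2 ^ v m x ≤ m ^ v m x := Nat.pow_le_pow_left hm _
    omega
  have hcm := count_merge hm hb hb0 s hs0 hNs
  have hcm' := count_merge hm hb hb0 s' hs0' hNs'
  rw [h, hcm'] at hcm
  have := digits_unique hm N (fun j => s'.count (m ^ j * b)) (fun j => s.count (m ^ j * b))
    (fun j => hsc' _) (fun j => hsc _) hcm (v m x) hkN
  rw [hxeq]
  exact this.symm

/-- split `c` copies of `b` into parts `m ^ k * b` with multiplicities the base-`m`
digits of `c`. -/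
def splitPart (m b c : ℕ) : Multiset ℕ :=
  if h : c = 0 ∨ m ≤ 1 then 0
  else Multiset.replicate (c % m) b + splitPart m (m * b) (c / m)
termination_by c
decreasing_by
  push_neg at h
  exact Nat.div_lt_self (Nat.pos_of_ne_zero h.1) (by omega)

lemma splitPart_zero (m b : ℕ) : splitPart m b 0 = 0 := by
  rw [splitPart]; simp

lemma splitPart_pos {m c : ℕ} (hm : 2 ≤ m) (hc : c ≠ 0) (b : ℕ) :
    splitPart m b c = Multiset.replicate (c % m) b + splitPart m (m * b) (c / m) := by
  rw [splitPart, dif_neg (by omega)]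

lemma splitPart_sum {m : ℕ} (hm : 2 ≤ m) (c : ℕ) : ∀ b, (splitPart m b c).sum = b * c := by
  induction c using Nat.strong_induction_on with
  | _ c ih =>
    intro b
    rcases eq_or_ne c 0 with rfl | hc
    · simp [splitPart_zero]
    · rw [splitPart_pos hm hc, Multiset.sum_add, Multiset.sum_replicate, smul_eq_mul,
        ih (c / m) (Nat.div_lt_self (Nat.pos_of_ne_zero hc) (by omega)) (m * b)]
      have h2 : b * (c % m) + b * (m * (c / m)) = b * c := by
        rw [← Nat.mul_add, Nat.mod_add_div]
      calc c % m * b + m * b * (c / m) = b * (c % m) + b * (m * (c / m)) := by ring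
      _ = b * c := h2

lemma splitPart_mem {m : ℕ} (hm : 2 ≤ m) (c : ℕ) :
    ∀ b x, x ∈ splitPart m b c → ∃ k, x = m ^ k * b := by
  induction c using Nat.strong_induction_on with
  | _ c ih =>
    intro b x hx
    rcases eq_or_ne c 0 with rfl | hc
    · simp [splitPart_zero] at hx
    · rw [splitPart_pos hm hc, Multiset.mem_add] at hx
      rcases hx with hx | hx
      · exact ⟨0, by simpa using Multiset.eq_of_mem_replicate hx⟩
      · obtain ⟨k, hk⟩ := ih (c / m) (Nat.div_lt_self (Nat.pos_of_ne_zero hc) (by omega))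
          (m * b) x hx
        exact ⟨k + 1, by rw [hk]; ring⟩

lemma merge_splitPart {m b : ℕ} (hm : 2 ≤ m) (hb : ¬ m ∣ b) (hb0 : 0 < b) (c : ℕ) :
    ∀ j, merge m (splitPart m (m ^ j * b) c) = Multiset.replicate (c * m ^ j) b := by
  induction c using Nat.strong_induction_on with
  | _ c ih =>
    intro j
    rcases eq_or_ne c 0 with rfl | hc
    · simp [splitPart_zero, merge_zero]
    · rw [splitPart_pos hm hc, merge_add, merge_replicate hm hb hb0 j,
        show m * (m ^ j * b) = m ^ (j + 1) * b by ring,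
        ih (c / m) (Nat.div_lt_self (Nat.pos_of_ne_zero hc) (by omega)) (j + 1),
        ← Multiset.replicate_add]
      congr 1
      have := Nat.mod_add_div c m
      calc c % m * m ^ j + c / m * m ^ (j + 1) = (c % m + m * (c / m)) * m ^ j := by ring
      _ = c * m ^ j := by rw [Nat.mod_add_div]

lemma splitPart_count_lt {m : ℕ} (hm : 2 ≤ m) (c : ℕ) :
    ∀ b, 0 < b → ∀ x, (splitPart m b c).count x < m := by
  induction c using Nat.strong_induction_on with
  | _ c ih =>
    intro b hb0 x
    rcases eq_or_ne c 0 with rfl | hc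
    · simp [splitPart_zero]; omega
    · rw [splitPart_pos hm hc, Multiset.count_add, Multiset.count_replicate]
      by_cases hx : b = x
      · have hnot : (splitPart m (m * b) (c / m)).count x = 0 := by
          rw [Multiset.count_eq_zero]
          intro hmem
          obtain ⟨k, hk⟩ := splitPart_mem hm (c / m) (m * b) x hmem
          have : m * b ≤ m ^ k * (m * b) :=
            Nat.le_mul_of_pos_left _ (by positivity)
          subst hx
          nlinarith
        rw [if_pos hx, hnot]
        have := Nat.mod_lt c (show 0 < m by omega)
        omega
      · rw [if_neg hx]
        have := ih (c / m) (Nat.div_lt_self (Nat.pos_of_ne_zero hc) (by omega)) (m * b)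
          (by positivity) x
        omega

def split (m : ℕ) (t : Multiset ℕ) : Multiset ℕ :=
  ∑ b ∈ t.toFinset, splitPart m b (t.count b)

lemma count_finset_sum {β : Type*} (x : ℕ) (F : Finset β) (g : β → Multiset ℕ) :
    (∑ b ∈ F, g b).count x = ∑ b ∈ F, (g b).count x :=
  map_sum (Multiset.countAddMonoidHom x) g F

lemma sum_finset_sum {β : Type*} (F : Finset β) (g : β → Multiset ℕ) :
    (∑ b ∈ F, g b).sum = ∑ b ∈ F, (g b).sum :=
  map_sum Multiset.sumAddMonoidHom g F

lemma split_sum {m : ℕ} (hm : 2 ≤ m) (t : Multiset ℕ) : (split m t).sum = t.sum := by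
  rw [split, sum_finset_sum]
  conv_rhs => rw [← Multiset.toFinset_sum_count_nsmul_eq t, sum_finset_sum]
  apply Finset.sum_congr rfl
  intro b _
  rw [splitPart_sum hm, Multiset.nsmul_singleton, Multiset.sum_replicate, smul_eq_mul,
    mul_comm]

lemma split_mem {m x : ℕ} (hm : 2 ≤ m) {t : Multiset ℕ} (hx : x ∈ split m t) :
    ∃ b ∈ t.toFinset, ∃ k, x = m ^ k * b := by
  rw [split, Multiset.mem_sum] at hx
  obtain ⟨b, hb, hmem⟩ := hx
  exact ⟨b, hb, splitPart_mem hm _ b x hmem⟩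

lemma split_count_lt {m : ℕ} (hm : 2 ≤ m) {t : Multiset ℕ}
    (ht0 : ∀ a ∈ t, 0 < a) (htd : ∀ a ∈ t, ¬ m ∣ a) (x : ℕ) :
    (split m t).count x < m := by
  classical
  rw [split, count_finset_sum]
  by_cases h : ∃ b ∈ t.toFinset, x ∈ splitPart m b (t.count b)
  · obtain ⟨b1, hb1, hmem1⟩ := h
    have hb1t := Multiset.mem_toFinset.mp hb1
    rw [Finset.sum_eq_single_of_mem b1 hb1]
    · exact splitPart_count_lt hm _ b1 (ht0 b1 hb1t) x
    · intro b hb hne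
      rw [Multiset.count_eq_zero]
      intro hmem
      obtain ⟨k, hk⟩ := splitPart_mem hm _ b x hmem
      obtain ⟨j, hj⟩ := splitPart_mem hm _ b1 x hmem1
      have hbt := Multiset.mem_toFinset.mp hb
      exact hne (base_unique hm (htd b hbt) (ht0 b hbt) (htd b1 hb1t) (ht0 b1 hb1t)
        (hk.symm.trans hj))
  · push_neg at h
    rw [Finset.sum_eq_zero]
    · omega
    · intro b hb
      exact Multiset.count_eq_zero.mpr (h b hb)

lemma merge_split {m : ℕ} (hm : 2 ≤ m) {t : Multiset ℕ}
    (ht0 : ∀ a ∈ t, 0 < a) (htd : ∀ a ∈ t, ¬ m ∣ a) :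
    merge m (split m t) = t := by
  rw [split, merge_finset_sum]
  conv_rhs => rw [← Multiset.toFinset_sum_count_nsmul_eq t]
  apply Finset.sum_congr rfl
  intro b hb
  have hbt := Multiset.mem_toFinset.mp hb
  have := merge_splitPart hm (htd b hbt) (ht0 b hbt) (t.count b) 0
  simp only [pow_zero, one_mul, mul_one] at this
  rw [this, Multiset.nsmul_singleton]

end GlaisherAux

open GlaisherAux in
/-- Glaisher's theorem: for `m ≥ 2`, the number of partitions of `n` in which each part
occurs fewer than `m` times equals the number of partitions of `n` into parts not
divisible by `m`. Partitions are modeled as multisets of positive integers summing to `n`. -/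
theorem glaisher_theorem (m : ℕ) (hm : 2 ≤ m) (n : ℕ) :
    Nat.card {s : Multiset ℕ // s.sum = n ∧ (∀ a ∈ s, 0 < a) ∧ ∀ a, s.count a < m} =
    Nat.card {s : Multiset ℕ // s.sum = n ∧ (∀ a ∈ s, 0 < a) ∧ ∀ a ∈ s, ¬ m ∣ a} := by
  -- properties of `merge` on the A side
  have hmergeB : ∀ s : Multiset ℕ, (∀ a ∈ s, 0 < a) →
      (∀ a ∈ merge m s, 0 < a) ∧ (∀ a ∈ merge m s, ¬ m ∣ a) := by
    intro s hs0
    constructor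
    · intro x hx
      obtain ⟨a, ha, rfl⟩ := (mem_merge hm).mp hx
      exact Nat.div_pos (Nat.le_of_dvd (hs0 a ha) (pow_v_dvd m a)) (by positivity)
    · intro x hx
      obtain ⟨a, ha, rfl⟩ := (mem_merge hm).mp hx
      exact not_dvd_div hm (hs0 a ha)
  have hsplitA : ∀ t : Multiset ℕ, (∀ a ∈ t, 0 < a) →
      (∀ a ∈ split m t, 0 < a) := by
    intro t ht0 x hx
    obtain ⟨b, hb, k, rfl⟩ := split_mem hm hx
    have := ht0 b (Multiset.mem_toFinset.mp hb)
    positivity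
  refine Nat.card_congr ⟨?_, ?_, ?_, ?_⟩
  · rintro ⟨s, hsum, hpos, hcnt⟩
    exact ⟨merge m s, by rw [merge_sum, hsum], (hmergeB s hpos).1, (hmergeB s hpos).2⟩
  · rintro ⟨t, hsum, hpos, hdvd⟩
    exact ⟨split m t, by rw [split_sum hm, hsum], hsplitA t hpos,
      fun x => split_count_lt hm hpos hdvd x⟩
  · rintro ⟨s, hsum, hpos, hcnt⟩
    simp only [Subtype.mk.injEq]
    -- split (merge s) = s
    have hB := hmergeB s hpos
    apply merge_inj hm (hsplitA _ hB.1) (fun x => split_count_lt hm hB.1 hB.2 x) hpos hcnt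
    exact merge_split hm hB.1 hB.2
  · rintro ⟨t, hsum, hpos, hdvd⟩
    simp only [Subtype.mk.injEq]
    exact merge_split hm hpos hdvd
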